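/- Let X be a finite-dimensional real normed space, f : X → X nonexpansive with Fix(f) nonempty. Then for every x ∈ X the Krasnoselskii iterates x^{k+1} = (f(x^k) + x^k)/2 converge to a fixed point of f, and the map R(x) = lim_k ((f + id)/2)^k(x) is a nonexpansive retraction of X onto Fix(f). -/

import Mathlib

open Filter

private theorem stmt_9_Tnonexp {X : Type*} [NormedAddCommGroup X] [NormedSpace ℝ X]
    (f : X → X) (hf : ∀ u v : X, ‖f u - f v‖ ≤ ‖u - v‖) (u v : X) :
    ‖(2⁻¹ : ℝ) • (f u + u) - (2⁻¹ : ℝ) • (f v + v)‖ ≤ ‖u - v‖ := by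
  have h : (2⁻¹ : ℝ) • (f u + u) - (2⁻¹ : ℝ) • (f v + v)
      = (2⁻¹ : ℝ) • ((f u - f v) + (u - v)) := by module
  rw [h, norm_smul]
  have h1 := norm_add_le (f u - f v) (u - v)
  have h2 := hf u v
  have h3 : ‖(2⁻¹ : ℝ)‖ = 2⁻¹ := by norm_num [Real.norm_eq_abs]
  rw [h3]
  nlinarith [norm_nonneg (u - v)]

private theorem stmt_9_key {X : Type*} [NormedAddCommGroup X] [NormedSpace ℝ X]
    [FiniteDimensional ℝ X]
    (f : X → X) (hf : ∀ u v : X, ‖f u - f v‖ ≤ ‖u - v‖)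
    (p : X) (hp : f p = p) (x : X) :
    ∃ q : X, Tendsto (fun k => (fun z => (2⁻¹ : ℝ) • (f z + z))^[k] x)
      atTop (nhds q) ∧ f q = q := by
  set T : X → X := fun z => (2⁻¹ : ℝ) • (f z + z) with hTdef
  have hT : ∀ u v, ‖T u - T v‖ ≤ ‖u - v‖ := fun u v => stmt_9_Tnonexp f hf u v
  set y : ℕ → X := fun k => T^[k] x with hydef
  have hy0 : y 0 = x := rfl
  have hysucc : ∀ k, y (k + 1) = T (y k) := by
    intro k
    simp only [hydef, Function.iterate_succ_apply']
  set a : ℕ → ℝ := fun k => ‖f (y k) - y k‖ with hadef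
  have ha_nonneg : ∀ k, 0 ≤ a k := fun k => norm_nonneg _
  -- step size
  have hstep : ∀ k, ‖y (k + 1) - y k‖ = a k / 2 := by
    intro k
    have h : y (k + 1) - y k = (2⁻¹ : ℝ) • (f (y k) - y k) := by
      rw [hysucc]; simp only [hTdef]; module
    rw [h, norm_smul]
    have h3 : ‖(2⁻¹ : ℝ)‖ = 2⁻¹ := by norm_num [Real.norm_eq_abs]
    rw [h3]; ring
  -- a is antitone
  have ha_succ : ∀ k, a (k + 1) ≤ a k := by
    intro k
    have h : f (y (k + 1)) - y (k + 1)
        = (f (y (k + 1)) - f (y k)) + (2⁻¹ : ℝ) • (f (y k) - y k) := by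
      rw [hysucc]; simp only [hTdef]; module
    calc a (k + 1) = ‖(f (y (k + 1)) - f (y k)) + (2⁻¹ : ℝ) • (f (y k) - y k)‖ := by
            show ‖f (y (k + 1)) - y (k + 1)‖ = _; rw [h]
      _ ≤ ‖f (y (k + 1)) - f (y k)‖ + ‖(2⁻¹ : ℝ) • (f (y k) - y k)‖ := norm_add_le _ _
      _ ≤ ‖y (k + 1) - y k‖ + ‖(2⁻¹ : ℝ) • (f (y k) - y k)‖ := by
            have := hf (y (k + 1)) (y k); linarith
      _ ≤ a k := by
            rw [hstep, norm_smul]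
            have h3 : ‖(2⁻¹ : ℝ)‖ = 2⁻¹ := by norm_num [Real.norm_eq_abs]
            rw [h3]; linarith [ha_nonneg k]
  have ha_anti : Antitone a := antitone_nat_of_succ_le ha_succ
  -- Fejér monotonicity
  have hTp : T p = p := by
    simp only [hTdef, hp]; module
  have hq_fix : ∀ q : X, f q = q → T q = q := by
    intro q hq; simp only [hTdef, hq]; module
  have hfej : ∀ q : X, f q = q → ∀ k, ‖y (k + 1) - q‖ ≤ ‖y k - q‖ := by
    intro q hq k
    have := hT (y k) q
    rw [hq_fix q hq] at this
    rw [hysucc]; exact this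
  have hbound : ∀ k, ‖y k - p‖ ≤ ‖x - p‖ := by
    intro k
    induction k with
    | zero => rw [hy0]
    | succ n ih => exact le_trans (hfej p hp n) ih
  -- distance between iterates
  have hdist : ∀ i m, ‖y (i + m) - y i‖ ≤ (m : ℝ) / 2 * a i := by
    intro i m
    induction m with
    | zero => simp
    | succ n ih =>
        have h1 : ‖y (i + n + 1) - y (i + n)‖ = a (i + n) / 2 := hstep (i + n)
        have h2 : a (i + n) ≤ a i := ha_anti (Nat.le_add_right i n)
        have h3 := norm_sub_le_norm_sub_add_norm_sub (y (i + (n + 1))) (y (i + n)) (y i)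
        have he : i + (n + 1) = i + n + 1 := by omega
        rw [he] at h3 ⊢
        push_cast
        calc ‖y (i + n + 1) - y i‖ ≤ ‖y (i + n + 1) - y (i + n)‖ + ‖y (i + n) - y i‖ := h3
          _ ≤ a (i + n) / 2 + (n : ℝ) / 2 * a i := by rw [h1]; linarith
          _ ≤ ((n : ℝ) + 1) / 2 * a i := by linarith
  -- Ishikawa's inequality
  have ish : ∀ n i, (2 : ℝ) ^ n * (a (i + n) - a i) + (1 + (n : ℝ) / 2) * a i
      ≤ ‖f (y (i + n)) - y i‖ := by
    intro n
    induction n with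
    | zero => intro i; simp [hadef]
    | succ n ih =>
        intro i
        -- identity : f (y (i+n+1)) - y i = 2 • (f (y (i+n+1)) - y (i+1)) - (f (y (i+n+1)) - f (y i))
        have hid : f (y (i + (n + 1))) - y i
            = (2 : ℝ) • (f (y (i + (n + 1))) - y (i + 1)) - (f (y (i + (n + 1))) - f (y i)) := by
          have h : y (i + 1) = (2⁻¹ : ℝ) • (f (y i) + y i) := by rw [hysucc]
          rw [h]; module
        have h1 : (2 : ℝ) * ‖f (y (i + (n + 1))) - y (i + 1)‖ - ‖f (y (i + (n + 1))) - f (y i)‖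
            ≤ ‖f (y (i + (n + 1))) - y i‖ := by
          rw [hid]
          have := norm_sub_norm_le ((2 : ℝ) • (f (y (i + (n + 1))) - y (i + 1)))
            (f (y (i + (n + 1))) - f (y i))
          have h2 : ‖(2 : ℝ) • (f (y (i + (n + 1))) - y (i + 1))‖
              = 2 * ‖f (y (i + (n + 1))) - y (i + 1)‖ := by
            rw [norm_smul]; norm_num [Real.norm_eq_abs]
          linarith
        have h2 : ‖f (y (i + (n + 1))) - f (y i)‖ ≤ ((n : ℝ) + 1) / 2 * a i := by
          calc ‖f (y (i + (n + 1))) - f (y i)‖ ≤ ‖y (i + (n + 1)) - y i‖ := hf _ _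
            _ ≤ ((n : ℝ) + 1) / 2 * a i := by have := hdist i (n + 1); push_cast at this ⊢; linarith
        have h3 := ih (i + 1)
        have he : i + 1 + n = i + (n + 1) := by omega
        rw [he] at h3
        -- combine
        have hmono : a (i + 1) ≤ a i := ha_succ i
        have hpow : ((n : ℝ) + 2) ≤ 2 ^ (n + 1) := by
          have hnat : n + 2 ≤ 2 ^ (n + 1) := Nat.lt_two_pow_self (n := n + 1)
          exact_mod_cast hnat
        have hkey : (2 : ℝ) ^ (n + 1) * (a (i + (n + 1)) - a i) + (1 + ((n : ℝ) + 1) / 2) * a i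
            ≤ 2 * ((2 : ℝ) ^ n * (a (i + (n + 1)) - a (i + 1)) + (1 + (n : ℝ) / 2) * a (i + 1))
              - ((n : ℝ) + 1) / 2 * a i := by
          have hc : (0 : ℝ) ≤ (2 ^ (n + 1) - ((n : ℝ) + 2)) * (a i - a (i + 1)) :=
            mul_nonneg (by linarith) (by linarith)
          ring_nf
          ring_nf at hc
          nlinarith [hc]
        push_cast
        push_cast at hkey h3
        nlinarith [h3, h1, h2, hkey]
  -- the limit of a is zero
  have hbdd : BddBelow (Set.range a) := ⟨0, by rintro _ ⟨k, rfl⟩; exact ha_nonneg k⟩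
  set A : ℝ := ⨅ k, a k with hAdef
  have hA : Tendsto a atTop (nhds A) := tendsto_atTop_ciInf ha_anti hbdd
  have hA_nonneg : 0 ≤ A := le_ciInf ha_nonneg
  have hA_le : ∀ k, A ≤ a k := fun k => ciInf_le hbdd k
  have hA0 : A = 0 := by
    by_contra h
    have hApos : 0 < A := lt_of_le_of_ne hA_nonneg (Ne.symm h)
    obtain ⟨n, hn⟩ := exists_nat_gt (2 * (2 * ‖x - p‖ + 1) / A)
    have hn' : 2 * ‖x - p‖ + 1 < (1 + (n : ℝ) / 2) * A := by
      rw [div_lt_iff₀ hApos] at hn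
      nlinarith
    have htend : Tendsto (fun i => a i - a (i + n)) atTop (nhds 0) := by
      have h2 : Tendsto (fun i => a (i + n)) atTop (nhds A) :=
        hA.comp (tendsto_add_atTop_nat n)
      have := hA.sub h2
      simpa using this
    have hev : ∃ i, a i - a (i + n) < ((2 : ℝ) ^ n)⁻¹ :=
      (htend.eventually (gt_mem_nhds (by positivity : (0 : ℝ) < ((2 : ℝ) ^ n)⁻¹))).exists
    obtain ⟨i, hi⟩ := hev
    have hish := ish n i
    have hub : ‖f (y (i + n)) - y i‖ ≤ 2 * ‖x - p‖ := by
      calc ‖f (y (i + n)) - y i‖ ≤ ‖f (y (i + n)) - f p‖ + ‖f p - y i‖ :=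
            norm_sub_le_norm_sub_add_norm_sub _ _ _
        _ ≤ ‖y (i + n) - p‖ + ‖p - y i‖ := by
            have := hf (y (i + n)) p; rw [hp] at this ⊢; linarith
        _ ≤ 2 * ‖x - p‖ := by
            have h1 := hbound (i + n)
            have h2 := hbound i
            rw [norm_sub_rev p (y i)]; linarith
    have hpow : (0 : ℝ) < 2 ^ n := by positivity
    have hmul : (2 : ℝ) ^ n * (a i - a (i + n)) < 1 := by
      have := mul_lt_mul_of_pos_left hi hpow
      rwa [mul_inv_cancel₀ (ne_of_gt hpow)] at this
    have hlow : (1 + (n : ℝ) / 2) * A ≤ (1 + (n : ℝ) / 2) * a i :=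
      mul_le_mul_of_nonneg_left (hA_le i) (by positivity)
    have e1 : (2 : ℝ) ^ n * (a (i + n) - a i) = -((2 : ℝ) ^ n * (a i - a (i + n))) := by ring
    linarith [hish, hub, hmul, hlow, hn', e1]
  have ha0 : Tendsto a atTop (nhds 0) := hA0 ▸ hA
  -- convergent subsequence
  have hbdd2 : Bornology.IsBounded (Metric.closedBall p ‖x - p‖) := Metric.isBounded_closedBall
  have hmem : ∀ k, y k ∈ Metric.closedBall p ‖x - p‖ := by
    intro k
    rw [Metric.mem_closedBall, dist_eq_norm]
    exact hbound k
  obtain ⟨q, -, φ, hφ, hyφ⟩ := tendsto_subseq_of_bounded hbdd2 hmem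
  -- q is fixed
  have hfc : Continuous f := by
    have : LipschitzWith 1 f := by
      apply LipschitzWith.of_dist_le_mul
      intro u v
      rw [dist_eq_norm, dist_eq_norm]
      simpa using hf u v
    exact this.continuous
  have hq : f q = q := by
    have h1 : Tendsto (fun j => f (y (φ j)) - y (φ j)) atTop (nhds (f q - q)) :=
      ((hfc.tendsto q).comp hyφ).sub hyφ
    have h2 : Tendsto (fun j => ‖f (y (φ j)) - y (φ j)‖) atTop (nhds ‖f q - q‖) := h1.norm
    have h3 : Tendsto (fun j => a (φ j)) atTop (nhds 0) := ha0.comp hφ.tendsto_atTop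
    have h4 : ‖f q - q‖ = 0 := tendsto_nhds_unique h2 h3
    rw [norm_eq_zero, sub_eq_zero] at h4
    exact h4
  -- full convergence
  refine ⟨q, ?_, hq⟩
  set b : ℕ → ℝ := fun k => ‖y k - q‖ with hbdef
  have hb_anti : Antitone b := antitone_nat_of_succ_le (hfej q hq)
  have hb_bdd : BddBelow (Set.range b) := ⟨0, by rintro _ ⟨k, rfl⟩; exact norm_nonneg _⟩
  have hbA : Tendsto b atTop (nhds (⨅ k, b k)) := tendsto_atTop_ciInf hb_anti hb_bdd
  have hb0 : Tendsto (fun j => b (φ j)) atTop (nhds 0) := by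
    have : Tendsto (fun j => y (φ j) - q) atTop (nhds (q - q)) := hyφ.sub_const q
    rw [sub_self] at this
    simpa [hbdef] using this.norm
  have hsub : Tendsto (fun j => b (φ j)) atTop (nhds (⨅ k, b k)) :=
    hbA.comp hφ.tendsto_atTop
  have hiq : (⨅ k, b k) = 0 := tendsto_nhds_unique hsub hb0
  have hbz : Tendsto b atTop (nhds 0) := hiq ▸ hbA
  rw [tendsto_iff_norm_sub_tendsto_zero]
  exact hbz

theorem stmt_9 {X : Type*} [NormedAddCommGroup X] [NormedSpace ℝ X]
    [FiniteDimensional ℝ X]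
    (f : X → X) (hf : ∀ u v : X, ‖f u - f v‖ ≤ ‖u - v‖)
    (hne : (Function.fixedPoints f).Nonempty) :
    ∃ R : X → X,
      (∀ x : X, Tendsto (fun k => (fun z => (2⁻¹ : ℝ) • (f z + z))^[k] x)
        atTop (nhds (R x))) ∧
      (∀ x : X, f (R x) = R x) ∧
      (∀ u v : X, ‖R u - R v‖ ≤ ‖u - v‖) ∧
      Set.range R = Function.fixedPoints f ∧
      (∀ x ∈ Function.fixedPoints f, R x = x) := by
  obtain ⟨p, hp⟩ := hne
  have hp' : f p = p := hp
  have key := fun x => stmt_9_key f hf p hp' x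
  choose R hR1 hR2 using key
  have hT : ∀ u v, ‖(2⁻¹ : ℝ) • (f u + u) - (2⁻¹ : ℝ) • (f v + v)‖ ≤ ‖u - v‖ :=
    stmt_9_Tnonexp f hf
  have hiter : ∀ (k : ℕ) (u v : X),
      ‖(fun z => (2⁻¹ : ℝ) • (f z + z))^[k] u - (fun z => (2⁻¹ : ℝ) • (f z + z))^[k] v‖
        ≤ ‖u - v‖ := by
    intro k
    induction k with
    | zero => intro u v; simp
    | succ n ih =>
        intro u v
        rw [Function.iterate_succ_apply', Function.iterate_succ_apply']
        exact le_trans (hT _ _) (ih u v)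
  have hret : ∀ x ∈ Function.fixedPoints f, R x = x := by
    intro x hx
    have hx' : f x = x := hx
    have hTx : (fun z => (2⁻¹ : ℝ) • (f z + z)) x = x := by
      show (2⁻¹ : ℝ) • (f x + x) = x
      rw [hx']; module
    have hconst : ∀ k, (fun z => (2⁻¹ : ℝ) • (f z + z))^[k] x = x := by
      intro k
      induction k with
      | zero => rfl
      | succ n ih => rw [Function.iterate_succ_apply', ih]; exact hTx
    have h1 : Tendsto (fun k => (fun z => (2⁻¹ : ℝ) • (f z + z))^[k] x) atTop (nhds x) := by
      simp only [hconst]; exact tendsto_const_nhds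
    exact tendsto_nhds_unique (hR1 x) h1
  refine ⟨R, hR1, hR2, ?_, ?_, hret⟩
  · intro u v
    have h1 : Tendsto (fun k => ‖(fun z => (2⁻¹ : ℝ) • (f z + z))^[k] u
        - (fun z => (2⁻¹ : ℝ) • (f z + z))^[k] v‖) atTop (nhds ‖R u - R v‖) :=
      ((hR1 u).sub (hR1 v)).norm
    exact le_of_tendsto h1 (Eventually.of_forall fun k => hiter k u v)
  · apply Set.Subset.antisymm
    · rintro _ ⟨x, rfl⟩
      exact hR2 x
    · intro y hy
      exact ⟨y, hret y hy⟩
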